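/- Let X1, X2, X3 be tuples of random variables on a finite probability space with X3 a sub-tuple of the combined tuple (X1, X2), and let W be a random variable with H(W | Xi) = 0 for i = 1,2,3. Then the triple mutual information satisfies I(X1; X2; X3) ≥ H(W). -/

import Mathlib

open Finset

/-- Probability mass of the event `X = a` under weights `p`. -/
noncomputable def pmass {Ω α : Type} [Fintype Ω] [DecidableEq α]
    (p : Ω → ℝ) (X : Ω → α) (a : α) : ℝ :=
  ∑ ω, if X ω = a then p ω else 0

/-- Shannon entropy (base 2) of a random variable `X` on a finite space. -/
noncomputable def ent {Ω α : Type} [Fintype Ω] [Fintype α] [DecidableEq α]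
    (p : Ω → ℝ) (X : Ω → α) : ℝ :=
  ∑ a, -(pmass p X a * Real.logb 2 (pmass p X a))

set_option linter.unusedSectionVars false

section AuxLemmas

variable {Ω α β γ : Type} [Fintype Ω] [Fintype α] [Fintype β] [Fintype γ]
  [DecidableEq α] [DecidableEq β] [DecidableEq γ]

lemma pmass_nonneg (p : Ω → ℝ) (hp0 : ∀ ω, 0 ≤ p ω) (X : Ω → α) (a : α) :
    0 ≤ pmass p X a := by
  refine Finset.sum_nonneg fun ω _ => ?_
  split <;> simp [hp0 ω]

lemma le_pmass (p : Ω → ℝ) (hp0 : ∀ ω, 0 ≤ p ω) (X : Ω → α) (ω : Ω) :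
    p ω ≤ pmass p X (X ω) := by
  have := Finset.single_le_sum (f := fun ω' => if X ω' = X ω then p ω' else 0)
    (fun ω' _ => by split <;> simp [hp0 ω']) (Finset.mem_univ ω)
  simpa [pmass] using this

lemma pmass_mono (p : Ω → ℝ) (hp0 : ∀ ω, 0 ≤ p ω) (X : Ω → α) (Y : Ω → β)
    (a : α) (b : β) (h : ∀ ω, X ω = a → Y ω = b) :
    pmass p X a ≤ pmass p Y b := by
  refine Finset.sum_le_sum fun ω _ => ?_
  by_cases hx : X ω = a
  · simp [hx, h ω hx]
  · simp only [hx, if_false]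
    split <;> simp [hp0 ω]

lemma sum_pmass_mul (p : Ω → ℝ) (X : Ω → α) (g : α → ℝ) :
    ∑ a, pmass p X a * g a = ∑ ω, p ω * g (X ω) := by
  unfold pmass
  simp_rw [Finset.sum_mul, ite_mul, zero_mul]
  rw [Finset.sum_comm]
  refine Finset.sum_congr rfl fun ω _ => ?_
  rw [Finset.sum_ite_eq univ (X ω) (fun a => p ω * g a)]
  simp

lemma ent_eq (p : Ω → ℝ) (X : Ω → α) :
    ent p X = -∑ ω, p ω * Real.logb 2 (pmass p X (X ω)) := by
  unfold ent
  rw [← sum_pmass_mul p X (fun a => Real.logb 2 (pmass p X a))]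
  simp [Finset.sum_neg_distrib]

lemma ent_comp_le (p : Ω → ℝ) (hp0 : ∀ ω, 0 ≤ p ω) (X : Ω → α) (f : α → β) :
    ent p (fun ω => f (X ω)) ≤ ent p X := by
  rw [ent_eq, ent_eq]
  rw [neg_le_neg_iff]
  refine Finset.sum_le_sum fun ω _ => ?_
  rcases eq_or_lt_of_le (hp0 ω) with h0 | h0
  · simp [← h0]
  · have h1 : p ω ≤ pmass p X (X ω) := le_pmass p hp0 X ω
    have h2 : pmass p X (X ω) ≤ pmass p (fun ω' => f (X ω')) (f (X ω)) :=
      pmass_mono p hp0 _ _ _ _ (fun ω' hx => by simp [hx])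
    have : Real.logb 2 (pmass p X (X ω)) ≤
        Real.logb 2 (pmass p (fun ω' => f (X ω')) (f (X ω))) := by
      unfold Real.logb
      exact div_le_div_of_nonneg_right
        (Real.log_le_log (lt_of_lt_of_le h0 h1) h2) (Real.log_pos one_lt_two).le
    exact mul_le_mul_of_nonneg_left this (hp0 ω)

lemma ent_congr (p : Ω → ℝ) (hp0 : ∀ ω, 0 ≤ p ω) (X : Ω → α) (Y : Ω → β)
    (f : α → β) (g : β → α) (hf : ∀ ω, Y ω = f (X ω)) (hg : ∀ ω, X ω = g (Y ω)) :
    ent p Y = ent p X := by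
  have h1 : ent p Y = ent p (fun ω => f (X ω)) := by
    congr 1; funext ω; exact hf ω
  have h2 : ent p X = ent p (fun ω => g (Y ω)) := by
    congr 1; funext ω; exact hg ω
  refine le_antisymm ?_ ?_
  · rw [h1]; exact ent_comp_le p hp0 X f
  · rw [h2]; exact ent_comp_le p hp0 Y g

lemma sum_pmass_fst (p : Ω → ℝ) (X : Ω → α) (Z : Ω → γ) (z : γ) :
    ∑ x, pmass p (fun ω => (X ω, Z ω)) (x, z) = pmass p Z z := by
  unfold pmass
  rw [Finset.sum_comm]
  refine Finset.sum_congr rfl fun ω _ => ?_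
  by_cases hz : Z ω = z
  · simp only [Prod.mk.injEq, hz, and_true]
    rw [Finset.sum_ite_eq univ (X ω) (fun _ => p ω)]
    simp [hz]
  · simp [Prod.mk.injEq, hz]

lemma sum_pmass (p : Ω → ℝ) (X : Ω → α) : ∑ a, pmass p X a = ∑ ω, p ω := by
  have := sum_pmass_mul p X (fun _ => (1:ℝ))
  simpa using this

lemma div_aux (P A z : ℝ) (hA : 0 ≤ A) (hz : 0 ≤ z) (hP : 0 ≤ P) :
    P * (A / (P * z)) ≤ A / z := by
  rcases eq_or_lt_of_le hP with h | h
  · rw [← h]; simpa using div_nonneg hA hz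
  · rcases eq_or_lt_of_le hz with h2 | h2
    · rw [← h2]; simp
    · have : P * (A / (P * z)) = A / z := by field_simp
      exact this.le

lemma submod (p : Ω → ℝ) (hp0 : ∀ ω, 0 ≤ p ω) (hp1 : ∑ ω, p ω = 1)
    (X : Ω → α) (Y : Ω → β) (Z : Ω → γ) :
    ent p (fun ω => (X ω, Y ω, Z ω)) + ent p Z ≤
      ent p (fun ω => (X ω, Z ω)) + ent p (fun ω => (Y ω, Z ω)) := by
  have hlog2 : (0:ℝ) < Real.log 2 := Real.log_pos one_lt_two
  have hsum : ∑ ω, p ω *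
      (pmass p (fun ω' => (X ω', Z ω')) (X ω, Z ω) * pmass p (fun ω' => (Y ω', Z ω')) (Y ω, Z ω) /
        (pmass p (fun ω' => (X ω', Y ω', Z ω')) (X ω, Y ω, Z ω) * pmass p Z (Z ω))) ≤ 1 := by
    rw [← sum_pmass_mul p (fun ω => (X ω, Y ω, Z ω))
      (fun t => pmass p (fun ω' => (X ω', Z ω')) (t.1, t.2.2) *
        pmass p (fun ω' => (Y ω', Z ω')) (t.2.1, t.2.2) /
        (pmass p (fun ω' => (X ω', Y ω', Z ω')) t * pmass p Z t.2.2))]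
    have step1 : ∑ t : α × β × γ,
        pmass p (fun ω' => (X ω', Y ω', Z ω')) t *
          (pmass p (fun ω' => (X ω', Z ω')) (t.1, t.2.2) *
            pmass p (fun ω' => (Y ω', Z ω')) (t.2.1, t.2.2) /
            (pmass p (fun ω' => (X ω', Y ω', Z ω')) t * pmass p Z t.2.2)) ≤
        ∑ t : α × β × γ, pmass p (fun ω' => (X ω', Z ω')) (t.1, t.2.2) *
            pmass p (fun ω' => (Y ω', Z ω')) (t.2.1, t.2.2) / pmass p Z t.2.2 := by
      refine Finset.sum_le_sum fun t _ => ?_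
      exact div_aux _ _ _ (mul_nonneg (pmass_nonneg p hp0 _ _) (pmass_nonneg p hp0 _ _))
        (pmass_nonneg p hp0 _ _) (pmass_nonneg p hp0 _ _)
    refine step1.trans ?_
    have step2 : ∑ t : α × β × γ, pmass p (fun ω' => (X ω', Z ω')) (t.1, t.2.2) *
            pmass p (fun ω' => (Y ω', Z ω')) (t.2.1, t.2.2) / pmass p Z t.2.2
        = ∑ z, ∑ y, ∑ x, pmass p (fun ω' => (X ω', Z ω')) (x, z) *
            pmass p (fun ω' => (Y ω', Z ω')) (y, z) / pmass p Z z := by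
      rw [Fintype.sum_prod_type]
      rw [Finset.sum_comm]
      rw [Fintype.sum_prod_type]
      exact Finset.sum_comm
    rw [step2]
    have step3 : ∀ z, (∑ y, ∑ x, pmass p (fun ω' => (X ω', Z ω')) (x, z) *
        pmass p (fun ω' => (Y ω', Z ω')) (y, z) / pmass p Z z) ≤ pmass p Z z := by
      intro z
      have e1 : (∑ y, ∑ x, pmass p (fun ω' => (X ω', Z ω')) (x, z) *
          pmass p (fun ω' => (Y ω', Z ω')) (y, z) / pmass p Z z)
          = pmass p Z z * (pmass p Z z / pmass p Z z) := by
        simp_rw [mul_div_assoc, ← Finset.sum_mul, sum_pmass_fst p X Z z, ← Finset.mul_sum,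
          ← Finset.sum_div, sum_pmass_fst p Y Z z]
      rw [e1]
      rcases eq_or_lt_of_le (pmass_nonneg p hp0 Z z) with h | h
      · rw [← h]; simp
      · rw [div_self h.ne', mul_one]
    calc (∑ z, ∑ y, ∑ x, pmass p (fun ω' => (X ω', Z ω')) (x, z) *
            pmass p (fun ω' => (Y ω', Z ω')) (y, z) / pmass p Z z)
        ≤ ∑ z, pmass p Z z := Finset.sum_le_sum fun z _ => step3 z
      _ = 1 := by rw [sum_pmass p Z, hp1]
  -- now the log step
  rw [ent_eq, ent_eq, ent_eq, ent_eq]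
  have key : ∀ ω, p ω * Real.logb 2 (pmass p (fun ω' => (X ω', Z ω')) (X ω, Z ω)) +
      p ω * Real.logb 2 (pmass p (fun ω' => (Y ω', Z ω')) (Y ω, Z ω)) -
      p ω * Real.logb 2 (pmass p (fun ω' => (X ω', Y ω', Z ω')) (X ω, Y ω, Z ω)) -
      p ω * Real.logb 2 (pmass p Z (Z ω)) ≤
      p ω * ((pmass p (fun ω' => (X ω', Z ω')) (X ω, Z ω) *
        pmass p (fun ω' => (Y ω', Z ω')) (Y ω, Z ω) /
        (pmass p (fun ω' => (X ω', Y ω', Z ω')) (X ω, Y ω, Z ω) * pmass p Z (Z ω))) - 1) /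
        Real.log 2 := by
    intro ω
    rcases eq_or_lt_of_le (hp0 ω) with h0 | h0
    · rw [← h0]; simp
    · have q1 : 0 < pmass p (fun ω' => (X ω', Z ω')) (X ω, Z ω) :=
        lt_of_lt_of_le h0 (le_pmass p hp0 (fun ω' => (X ω', Z ω')) ω)
      have q2 : 0 < pmass p (fun ω' => (Y ω', Z ω')) (Y ω, Z ω) :=
        lt_of_lt_of_le h0 (le_pmass p hp0 (fun ω' => (Y ω', Z ω')) ω)
      have q3 : 0 < pmass p (fun ω' => (X ω', Y ω', Z ω')) (X ω, Y ω, Z ω) :=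
        lt_of_lt_of_le h0 (le_pmass p hp0 (fun ω' => (X ω', Y ω', Z ω')) ω)
      have q4 : 0 < pmass p Z (Z ω) := lt_of_lt_of_le h0 (le_pmass p hp0 Z ω)
      have hr : (0:ℝ) < pmass p (fun ω' => (X ω', Z ω')) (X ω, Z ω) *
          pmass p (fun ω' => (Y ω', Z ω')) (Y ω, Z ω) /
          (pmass p (fun ω' => (X ω', Y ω', Z ω')) (X ω, Y ω, Z ω) * pmass p Z (Z ω)) := by
        positivity
      have hlogr := Real.log_le_sub_one_of_pos hr
      rw [Real.log_div (by positivity) (by positivity), Real.log_mul q1.ne' q2.ne',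
        Real.log_mul q3.ne' q4.ne'] at hlogr
      have hmul := mul_le_mul_of_nonneg_left hlogr h0.le
      calc p ω * Real.logb 2 (pmass p (fun ω' => (X ω', Z ω')) (X ω, Z ω)) +
          p ω * Real.logb 2 (pmass p (fun ω' => (Y ω', Z ω')) (Y ω, Z ω)) -
          p ω * Real.logb 2 (pmass p (fun ω' => (X ω', Y ω', Z ω')) (X ω, Y ω, Z ω)) -
          p ω * Real.logb 2 (pmass p Z (Z ω))
          = p ω * (Real.log (pmass p (fun ω' => (X ω', Z ω')) (X ω, Z ω)) +
            Real.log (pmass p (fun ω' => (Y ω', Z ω')) (Y ω, Z ω)) -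
            (Real.log (pmass p (fun ω' => (X ω', Y ω', Z ω')) (X ω, Y ω, Z ω)) +
            Real.log (pmass p Z (Z ω)))) / Real.log 2 := by
            unfold Real.logb; ring
        _ ≤ p ω * ((pmass p (fun ω' => (X ω', Z ω')) (X ω, Z ω) *
            pmass p (fun ω' => (Y ω', Z ω')) (Y ω, Z ω) /
            (pmass p (fun ω' => (X ω', Y ω', Z ω')) (X ω, Y ω, Z ω) * pmass p Z (Z ω))) - 1) /
            Real.log 2 := div_le_div_of_nonneg_right hmul hlog2.le
  have hs := Finset.sum_le_sum (fun ω (_ : ω ∈ univ) => key ω)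
  rw [Finset.sum_sub_distrib, Finset.sum_sub_distrib, Finset.sum_add_distrib] at hs
  have hs2 : (∑ ω, p ω * ((pmass p (fun ω' => (X ω', Z ω')) (X ω, Z ω) *
      pmass p (fun ω' => (Y ω', Z ω')) (Y ω, Z ω) /
      (pmass p (fun ω' => (X ω', Y ω', Z ω')) (X ω, Y ω, Z ω) * pmass p Z (Z ω))) - 1) /
      Real.log 2) ≤ 0 := by
    rw [← Finset.sum_div]
    refine div_nonpos_of_nonpos_of_nonneg ?_ hlog2.le
    simp_rw [mul_sub, mul_one, Finset.sum_sub_distrib, hp1]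
    linarith [hsum]
  linarith [hs, hs2]

lemma le_ent_pair (p : Ω → ℝ) (hp0 : ∀ ω, 0 ≤ p ω) (W : Ω → β) (U : Ω → α) :
    ent p U ≤ ent p (fun ω => (W ω, U ω)) :=
  ent_comp_le p hp0 (fun ω => (W ω, U ω)) Prod.snd

lemma condEnt_comp_le (p : Ω → ℝ) (hp0 : ∀ ω, 0 ≤ p ω) (hp1 : ∑ ω, p ω = 1)
    (W : Ω → γ) (U : Ω → α) (f : α → β) :
    ent p (fun ω => (W ω, U ω)) - ent p U ≤
      ent p (fun ω => (W ω, f (U ω))) - ent p (fun ω => f (U ω)) := by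
  have hsub := submod p hp0 hp1 W U (fun ω => f (U ω))
  have h1 : ent p (fun ω => (W ω, U ω, f (U ω))) = ent p (fun ω => (W ω, U ω)) :=
    ent_congr p hp0 (fun ω => (W ω, U ω)) _ (fun t => (t.1, t.2, f t.2))
      (fun t => (t.1, t.2.1)) (fun ω => rfl) (fun ω => rfl)
  have h2 : ent p (fun ω => (U ω, f (U ω))) = ent p U :=
    ent_congr p hp0 U _ (fun u => (u, f u)) Prod.fst (fun ω => rfl) (fun ω => rfl)
  linarith

lemma ent_pair_eq_of (p : Ω → ℝ) (hp0 : ∀ ω, 0 ≤ p ω) (hp1 : ∑ ω, p ω = 1)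
    (W : Ω → γ) (U : Ω → α) (f : α → β)
    (h : ent p (fun ω => (W ω, f (U ω))) = ent p (fun ω => f (U ω))) :
    ent p (fun ω => (W ω, U ω)) = ent p U := by
  have h1 := condEnt_comp_le p hp0 hp1 W U f
  have h2 := le_ent_pair p hp0 W U
  linarith

end AuxLemmas

/-- Conditional Shannon entropy `H(X|Y) = H(X,Y) - H(Y)`. -/
noncomputable def condEnt {Ω α β : Type} [Fintype Ω] [Fintype α] [Fintype β]
    [DecidableEq α] [DecidableEq β] (p : Ω → ℝ) (X : Ω → α) (Y : Ω → β) : ℝ :=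
  ent p (fun ω => (X ω, Y ω)) - ent p Y

/-- Conditional mutual information `I(X;Y|W) = H(X|W) + H(Y|W) - H(X,Y|W)`. -/
noncomputable def condMI {Ω α β γ : Type} [Fintype Ω] [Fintype α] [Fintype β] [Fintype γ]
    [DecidableEq α] [DecidableEq β] [DecidableEq γ]
    (p : Ω → ℝ) (X : Ω → α) (Y : Ω → β) (W : Ω → γ) : ℝ :=
  condEnt p X W + condEnt p Y W - condEnt p (fun ω => (X ω, Y ω)) W

/-- Triple (interaction) mutual information. -/
noncomputable def tripleMI {Ω α β γ : Type} [Fintype Ω] [Fintype α] [Fintype β] [Fintype γ]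
    [DecidableEq α] [DecidableEq β] [DecidableEq γ]
    (p : Ω → ℝ) (X : Ω → α) (Y : Ω → β) (Z : Ω → γ) : ℝ :=
  ent p X + ent p Y + ent p Z
    - ent p (fun ω => (X ω, Y ω)) - ent p (fun ω => (X ω, Z ω)) - ent p (fun ω => (Y ω, Z ω))
    + ent p (fun ω => (X ω, Y ω, Z ω))

set_option maxHeartbeats 1000000 in
/-- if `X3 = (g1(X1), g2(X2))` and `H(W|Xi) = 0` for `i = 1,2,3`,
then `I(X1;X2;X3) ≥ H(W)`. -/
theorem stmt_4 {Ω α β γ₁ γ₂ δ : Type}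
    [Fintype Ω] [Fintype α] [Fintype β] [Fintype γ₁] [Fintype γ₂] [Fintype δ]
    [DecidableEq α] [DecidableEq β] [DecidableEq γ₁] [DecidableEq γ₂] [DecidableEq δ]
    (p : Ω → ℝ) (hp0 : ∀ ω, 0 ≤ p ω) (hp1 : ∑ ω, p ω = 1)
    (X1 : Ω → α) (X2 : Ω → β) (X3 : Ω → γ₁ × γ₂) (W : Ω → δ)
    (g1 : α → γ₁) (g2 : β → γ₂)
    (hX3 : ∀ ω, X3 ω = (g1 (X1 ω), g2 (X2 ω)))
    (hW1 : condEnt p W X1 = 0) (hW2 : condEnt p W X2 = 0) (hW3 : condEnt p W X3 = 0) :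
    ent p W ≤ tripleMI p X1 X2 X3 := by
  have hX3' : X3 = fun ω => (g1 (X1 ω), g2 (X2 ω)) := funext hX3
  subst hX3'
  unfold tripleMI
  unfold condEnt at hW1 hW2 hW3
  -- basic equalities from the vanishing conditional entropies
  have E1 : ent p (fun ω => (W ω, X1 ω)) = ent p X1 := by linarith
  have E2 : ent p (fun ω => (W ω, X2 ω)) = ent p X2 := by linarith
  have E3 : ent p (fun ω => (W ω, (g1 (X1 ω), g2 (X2 ω)))) =
      ent p (fun ω => (g1 (X1 ω), g2 (X2 ω))) := by
    have : ent p (fun ω => (W ω, (fun ω => (g1 (X1 ω), g2 (X2 ω))) ω)) -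
        ent p (fun ω => (g1 (X1 ω), g2 (X2 ω))) = 0 := hW3
    linarith [this]
  -- squeezes: W is a.s. determined by the mixed pairs
  have Q1 : ent p (fun ω => (W ω, (X1 ω, g2 (X2 ω)))) = ent p (fun ω => (X1 ω, g2 (X2 ω))) := by
    refine ent_pair_eq_of p hp0 hp1 W (fun ω => (X1 ω, g2 (X2 ω)))
      (fun t => (g1 t.1, t.2)) ?_
    exact E3
  have Q2 : ent p (fun ω => (W ω, (g1 (X1 ω), X2 ω))) = ent p (fun ω => (g1 (X1 ω), X2 ω)) := by
    refine ent_pair_eq_of p hp0 hp1 W (fun ω => (g1 (X1 ω), X2 ω))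
      (fun t => (t.1, g2 t.2)) ?_
    exact E3
  -- relabelings of the goal's entropies
  have RA : ent p (fun ω => (X1 ω, (g1 (X1 ω), g2 (X2 ω)))) =
      ent p (fun ω => (X1 ω, g2 (X2 ω))) :=
    ent_congr p hp0 (fun ω => (X1 ω, g2 (X2 ω))) _
      (fun t => (t.1, (g1 t.1, t.2))) (fun t => (t.1, t.2.2)) (fun ω => rfl) (fun ω => rfl)
  have RB : ent p (fun ω => (X2 ω, (g1 (X1 ω), g2 (X2 ω)))) =
      ent p (fun ω => (g1 (X1 ω), X2 ω)) :=
    ent_congr p hp0 (fun ω => (g1 (X1 ω), X2 ω)) _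
      (fun t => (t.2, (t.1, g2 t.2))) (fun t => (t.2.1, t.1)) (fun ω => rfl) (fun ω => rfl)
  have RC : ent p (fun ω => (X1 ω, X2 ω, (g1 (X1 ω), g2 (X2 ω)))) =
      ent p (fun ω => (X1 ω, X2 ω)) :=
    ent_congr p hp0 (fun ω => (X1 ω, X2 ω)) _
      (fun t => (t.1, t.2, (g1 t.1, g2 t.2))) (fun t => (t.1, t.2.1)) (fun ω => rfl) (fun ω => rfl)
  -- first submodularity instance
  have F1 : ent p (fun ω => (g1 (X1 ω), X2 ω, W ω)) + ent p W ≤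
      ent p (fun ω => (g1 (X1 ω), W ω)) + ent p (fun ω => (X2 ω, W ω)) :=
    submod p hp0 hp1 (fun ω => g1 (X1 ω)) X2 W
  have G1 : ent p (fun ω => (g1 (X1 ω), X2 ω, W ω)) =
      ent p (fun ω => (W ω, (g1 (X1 ω), X2 ω))) :=
    ent_congr p hp0 (fun ω => (W ω, (g1 (X1 ω), X2 ω))) _
      (fun t => (t.2.1, t.2.2, t.1)) (fun t => (t.2.2, t.1, t.2.1)) (fun ω => rfl) (fun ω => rfl)
  have G2 : ent p (fun ω => (g1 (X1 ω), W ω)) = ent p (fun ω => (W ω, g1 (X1 ω))) :=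
    ent_congr p hp0 (fun ω => (W ω, g1 (X1 ω))) _ Prod.swap Prod.swap
      (fun ω => rfl) (fun ω => rfl)
  have G3 : ent p (fun ω => (X2 ω, W ω)) = ent p (fun ω => (W ω, X2 ω)) :=
    ent_congr p hp0 (fun ω => (W ω, X2 ω)) _ Prod.swap Prod.swap (fun ω => rfl) (fun ω => rfl)
  -- second submodularity instance
  have F2 : ent p (fun ω => (g2 (X2 ω), X1 ω, (W ω, g1 (X1 ω)))) +
        ent p (fun ω => (W ω, g1 (X1 ω))) ≤
      ent p (fun ω => (g2 (X2 ω), (W ω, g1 (X1 ω)))) +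
        ent p (fun ω => (X1 ω, (W ω, g1 (X1 ω)))) :=
    submod p hp0 hp1 (fun ω => g2 (X2 ω)) X1 (fun ω => (W ω, g1 (X1 ω)))
  have H1 : ent p (fun ω => (g2 (X2 ω), X1 ω, (W ω, g1 (X1 ω)))) =
      ent p (fun ω => (W ω, (X1 ω, g2 (X2 ω)))) :=
    ent_congr p hp0 (fun ω => (W ω, (X1 ω, g2 (X2 ω)))) _
      (fun t => (t.2.2, t.2.1, (t.1, g1 t.2.1))) (fun t => (t.2.2.1, (t.2.1, t.1)))
      (fun ω => rfl) (fun ω => rfl)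
  have H2 : ent p (fun ω => (g2 (X2 ω), (W ω, g1 (X1 ω)))) =
      ent p (fun ω => (W ω, (g1 (X1 ω), g2 (X2 ω)))) :=
    ent_congr p hp0 (fun ω => (W ω, (g1 (X1 ω), g2 (X2 ω)))) _
      (fun t => (t.2.2, (t.1, t.2.1))) (fun t => (t.2.1, (t.2.2, t.1)))
      (fun ω => rfl) (fun ω => rfl)
  have H3 : ent p (fun ω => (X1 ω, (W ω, g1 (X1 ω)))) = ent p (fun ω => (W ω, X1 ω)) :=
    ent_congr p hp0 (fun ω => (W ω, X1 ω)) _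
      (fun t => (t.2, (t.1, g1 t.2))) (fun t => (t.2.1, t.1)) (fun ω => rfl) (fun ω => rfl)
  linarith [F1, F2, E1, E2, E3, Q1, Q2, RA, RB, RC, G1, G2, G3, H1, H2, H3]
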